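/- Let n ≥ 1 and let A ∈ ℝ^{n×n} be a symmetric {0,1}-valued matrix with zero diagonal, the adjacency matrix of a simple graph G on Fin n. Suppose the edge set of G is the disjoint union of t sets B₁, …, B_t, where for each p there are disjoint vertex sets X_p, Y_p ⊆ Fin n such that B_p consists exactly of all pairs {x, y} with x ∈ X_p and y ∈ Y_p (i.e., each B_p is the edge set of a complete bipartite graph). Then A is constructible in 3t + 1 pulses. -/

import Mathlib

open Matrix

/-- The intrinsic coupling matrix `J` with `J i j = 1` for `i ≠ j` and `0` on the diagonal. -/
def Jmat (n : ℕ) : Matrix (Fin n) (Fin n) ℝ :=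
  fun i j => if i = j then 0 else 1

/-- `A` is constructible in `k` pulses: there are `P ∈ {-1,1}^{k×n}` and a diagonal
`W ∈ ℝ^{k×k}` with `Pᵀ W P ⊙ J = A`. -/
def Constructible (n k : ℕ) (A : Matrix (Fin n) (Fin n) ℝ) : Prop :=
  ∃ (P : Matrix (Fin k) (Fin n) ℝ) (W : Matrix (Fin k) (Fin k) ℝ),
    (∀ a i, P a i = 1 ∨ P a i = -1) ∧ W.IsDiag ∧
      (Pᵀ * W * P).hadamard (Jmat n) = A

open Classical in
/-- the ±1 pulse vectors associated to a biclique partition -/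
noncomputable def pulseQ {n : ℕ} {t : ℕ} (X Y : Fin t → Set (Fin n)) :
    ((Fin t × Fin 3) ⊕ Fin 1) → Fin n → ℝ := fun z i =>
  match z with
  | Sum.inl (p, r) =>
      if r = 0 then (if i ∈ X p then -1 else 1)
      else if r = 1 then (if i ∈ Y p then -1 else 1)
      else if (i ∈ X p ∨ i ∈ Y p) then -1 else 1
  | Sum.inr _ => 1

/-- the weights -/
noncomputable def pulseW (t : ℕ) : ((Fin t × Fin 3) ⊕ Fin 1) → ℝ := fun z =>
  match z with
  | Sum.inl (_, r) => if r = 2 then 1/4 else -1/4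
  | Sum.inr _ => t/4

open Classical in
lemma per_p {n t : ℕ} (X Y : Fin t → Set (Fin n)) (p : Fin t)
    (hXY : Disjoint (X p) (Y p)) (i j : Fin n) :
    (∑ r : Fin 3, pulseW t (Sum.inl (p, r)) * pulseQ X Y (Sum.inl (p, r)) i *
        pulseQ X Y (Sum.inl (p, r)) j) + 1/4
      = if ((i ∈ X p ∧ j ∈ Y p) ∨ (j ∈ X p ∧ i ∈ Y p)) then 1 else 0 := by
  have h1 : (1 : Fin 3) ≠ 0 := by decide
  have h2 : (2 : Fin 3) ≠ 0 := by decide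
  have h2' : (2 : Fin 3) ≠ 1 := by decide
  have h12 : (1 : Fin 3) ≠ 2 := by decide
  have h02 : (0 : Fin 3) ≠ 2 := by decide
  simp only [Fin.sum_univ_three, pulseQ, pulseW, if_pos rfl, if_neg h1, if_neg h2, if_neg h2',
    if_neg h12, if_neg h02]
  by_cases hiX : i ∈ X p <;> by_cases hiY : i ∈ Y p <;>
    by_cases hjX : j ∈ X p <;> by_cases hjY : j ∈ Y p <;>
    first
      | exact (Set.disjoint_left.mp hXY hiX hiY).elim
      | exact (Set.disjoint_left.mp hXY hjX hjY).elim
      | simp only [hiX, hiY, hjX, hjY, if_true, if_false, true_or, or_true, true_and, and_true,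
          false_or, or_false, false_and, and_false, not_false_iff, iff_true, iff_false,
          if_neg, if_pos]
      <;> norm_num

theorem stmt_7 (n t : ℕ) (hn : 1 ≤ n) (G : SimpleGraph (Fin n)) [DecidableRel G.Adj]
    (B : Fin t → Set (Sym2 (Fin n)))
    (X Y : Fin t → Set (Fin n))
    (hXY : ∀ p, Disjoint (X p) (Y p))
    (hB : ∀ p, B p = {e | ∃ x ∈ X p, ∃ y ∈ Y p, e = s(x, y)})
    (hdisj : ∀ p q : Fin t, p ≠ q → Disjoint (B p) (B q))
    (hcover : G.edgeSet = ⋃ p, B p) :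
    Constructible n (3 * t + 1) (G.adjMatrix ℝ) := by
  classical
  set e : ((Fin t × Fin 3) ⊕ Fin 1) ≃ Fin (3 * t + 1) :=
    ((finProdFinEquiv.trans (finCongr (mul_comm t 3))).sumCongr
      (Equiv.refl (Fin 1))).trans finSumFinEquiv with he
  set P : Matrix (Fin (3 * t + 1)) (Fin n) ℝ := fun k i => pulseQ X Y (e.symm k) i with hP
  set W : Matrix (Fin (3 * t + 1)) (Fin (3 * t + 1)) ℝ :=
    Matrix.diagonal (fun k => pulseW t (e.symm k)) with hW
  refine ⟨P, W, ?_, Matrix.isDiag_diagonal _, ?_⟩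
  · intro a i
    rcases hz : e.symm a with ⟨p, r⟩ | u <;> simp only [hP, pulseQ, hz] <;>
      first
        | (split_ifs <;> simp)
        | simp
  · funext i j
    have key : (Pᵀ * W * P) i j
        = ∑ k : Fin (3 * t + 1), pulseW t (e.symm k) * pulseQ X Y (e.symm k) i *
            pulseQ X Y (e.symm k) j := by
      rw [Matrix.mul_assoc, Matrix.mul_apply]
      refine Finset.sum_congr rfl fun k _ => ?_
      rw [Matrix.mul_apply, Finset.sum_eq_single k]
      · simp only [hP, hW, Matrix.diagonal_apply_eq, Matrix.transpose_apply]
        change pulseQ X Y (e.symm k) i * _ = _; ring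
      · intro b _ hb
        simp [hW, Matrix.diagonal_apply_ne' _ hb]
      · simp
    rw [Matrix.hadamard_apply, key,
      Equiv.sum_comp e.symm (fun z => pulseW t z * pulseQ X Y z i * pulseQ X Y z j)]
    rw [Fintype.sum_sum_type]
    -- the `Fin 1` part
    have hone : ∑ z : Fin 1, pulseW t (Sum.inr z) * pulseQ X Y (Sum.inr z) i *
        pulseQ X Y (Sum.inr z) j = (t : ℝ) / 4 := by
      simp [pulseW, pulseQ]
    rw [hone, Fintype.sum_prod_type]
    -- now case on i = j
    rcases eq_or_ne i j with rfl | hij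
    · simp [Jmat]
    · have hJ : Jmat n i j = 1 := by simp [Jmat, hij]
      rw [hJ, mul_one, SimpleGraph.adjMatrix_apply]
      have ht4 : (t : ℝ) / 4 = ∑ _p : Fin t, (1 : ℝ) / 4 := by
        simp [Finset.sum_const, Finset.card_univ]
        ring
      rw [ht4, ← Finset.sum_add_distrib]
      have step : ∀ p : Fin t,
          (∑ r : Fin 3, pulseW t (Sum.inl (p, r)) * pulseQ X Y (Sum.inl (p, r)) i *
            pulseQ X Y (Sum.inl (p, r)) j) + 1/4
          = if s(i, j) ∈ B p then (1 : ℝ) else 0 := by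
        intro p
        rw [per_p X Y p (hXY p) i j]
        congr 1
        have : s(i, j) ∈ B p ↔ ((i ∈ X p ∧ j ∈ Y p) ∨ (j ∈ X p ∧ i ∈ Y p)) := by
          rw [hB p]
          constructor
          · rintro ⟨x, hx, y, hy, hxy⟩
            rw [Sym2.eq_iff] at hxy
            rcases hxy with ⟨rfl, rfl⟩ | ⟨rfl, rfl⟩
            · exact Or.inl ⟨hx, hy⟩
            · exact Or.inr ⟨hx, hy⟩
          · rintro (⟨hx, hy⟩ | ⟨hx, hy⟩)
            · exact ⟨i, hx, j, hy, rfl⟩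
            · exact ⟨j, hx, i, hy, Sym2.eq_swap.symm⟩
        simp [this]
      rw [Finset.sum_congr rfl fun p _ => step p]
      by_cases hadj : G.Adj i j
      · have : s(i, j) ∈ ⋃ p, B p := by rw [← hcover]; exact hadj
        obtain ⟨p₀, hp₀⟩ := Set.mem_iUnion.mp this
        rw [if_pos hadj]
        rw [Finset.sum_eq_single_of_mem p₀ (Finset.mem_univ _)]
        · rw [if_pos hp₀]
        · intro q _ hq
          rw [if_neg]
          exact fun hmem => Set.disjoint_left.mp (hdisj q p₀ hq) hmem hp₀
      · rw [if_neg hadj]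
        refine Finset.sum_eq_zero fun p _ => ?_
        rw [if_neg]
        intro hmem
        exact hadj (by rw [← SimpleGraph.mem_edgeSet, hcover]; exact Set.mem_iUnion.mpr ⟨p, hmem⟩)
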